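/- The 6-vertex graph obtained from K_{2,3} by subdividing one edge once (equivalently, the graph consisting of two vertices joined by three internally disjoint paths of lengths 2, 2 and 3) is minimally unlabellable: it is not labellable, but every proper induced subgraph of it is labellable. -/
import Mathlib


/-- `H` is labellable: for some positive integer `k` the vertices of `H` can be
injectively labelled by `k`-element subsets of `ℕ` so that two distinct vertices
are adjacent if and only if their labels intersect in a set of size `k - 1`. -/
def Labellable {V : Type*} (H : SimpleGraph V) : Prop :=
  ∃ k : ℕ, 0 < k ∧ ∃ ℓ : V → Finset ℕ, Function.Injective ℓ ∧
    (∀ v, (ℓ v).card = k) ∧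
    ∀ u v : V, u ≠ v → (H.Adj u v ↔ (ℓ u ∩ ℓ v).card = k - 1)

/-- The 6-vertex graph obtained from `K_{2,3}` by subdividing one edge once:
the vertices `0` and `1` are joined by three internally disjoint paths,
`0-2-1`, `0-3-1` (lengths 2), and `0-4-5-1` (length 3). -/
def subdividedK23 : SimpleGraph (Fin 6) :=
  SimpleGraph.fromRel (fun a b =>
    (a.val, b.val) ∈ [(0, 2), (2, 1), (0, 3), (3, 1), (0, 4), (4, 5), (5, 1)])

instance : DecidableRel subdividedK23.Adj := fun a b =>
  decidable_of_iff' _ (SimpleGraph.fromRel_adj _ a b)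

private lemma inter_card_le {m : ℕ} {X Y : Finset ℕ} (hX : X.card = m+2) (hY : Y.card = m+2)
    (hne : X ≠ Y) (h : (X ∩ Y).card ≠ m+1) : (X ∩ Y).card ≤ m := by
  have h1 : (X ∩ Y).card ≤ m+2 := hX ▸ Finset.card_le_card Finset.inter_subset_left
  by_contra hcon
  have h3 : (X ∩ Y).card = m+2 := by omega
  have e1 : X ∩ Y = X := Finset.eq_of_subset_of_card_le Finset.inter_subset_left (by omega)
  have e2 : X ∩ Y = Y := Finset.eq_of_subset_of_card_le Finset.inter_subset_right (by omega)
  exact hne (by rw [← e1, e2])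

private lemma common_nbr {m : ℕ} {A B C : Finset ℕ}
    (hA : A.card = m+2) (hB : B.card = m+2) (hC : C.card = m+2)
    (hABle : (A ∩ B).card ≤ m)
    (hAC : (A ∩ C).card = m+1) (hBC : (B ∩ C).card = m+1) :
    (A ∩ B).card = m ∧ A ∩ B ⊆ C ∧ C ⊆ A ∪ B := by
  have key : ((C∩A) ∪ (C∩B)).card + ((C∩A) ∩ (C∩B)).card = (C∩A).card + (C∩B).card :=
    Finset.card_union_add_card_inter _ _
  have e1 : (C∩A) ∪ (C∩B) = C ∩ (A ∪ B) := (Finset.inter_union_distrib_left _ _ _).symm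
  have e2 : (C∩A) ∩ (C∩B) = C ∩ (A ∩ B) := by ext x; simp only [Finset.mem_inter]; tauto
  rw [e1, e2] at key
  have h1 : (C ∩ (A∪B)).card ≤ m+2 := hC ▸ Finset.card_le_card Finset.inter_subset_left
  have h2 : (C ∩ (A∩B)).card ≤ (A∩B).card := Finset.card_le_card Finset.inter_subset_right
  have hCA : (C∩A).card = m+1 := by rw [Finset.inter_comm]; exact hAC
  have hCB : (C∩B).card = m+1 := by rw [Finset.inter_comm]; exact hBC
  have hABm : (A∩B).card = m := by omega
  refine ⟨hABm, ?_, ?_⟩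
  · have e3 : C ∩ (A∩B) = A∩B :=
      Finset.eq_of_subset_of_card_le Finset.inter_subset_right (by omega)
    intro x hx
    have : x ∈ C ∩ (A∩B) := by rw [e3]; exact hx
    exact (Finset.mem_inter.mp this).1
  · have e4 : C ∩ (A∪B) = C :=
      Finset.eq_of_subset_of_card_le Finset.inter_subset_left (by omega)
    intro x hx
    have : x ∈ C ∩ (A∪B) := by rw [e4]; exact hx
    exact (Finset.mem_inter.mp this).2

private lemma split1 {m : ℕ} {X Y C : Finset ℕ} (hsub : X ∩ Y ⊆ C)
    (hXYm : (X ∩ Y).card = m) (hCX : (X ∩ C).card = m+1) :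
    (C ∩ (X \ Y)).card = 1 := by
  have key := Finset.card_inter_add_card_sdiff (C ∩ X) Y
  have e1 : (C ∩ X) ∩ Y = X ∩ Y := by
    ext x
    simp only [Finset.mem_inter]
    exact ⟨fun h => ⟨h.1.2, h.2⟩, fun h => ⟨⟨hsub (Finset.mem_inter.mpr h), h.1⟩, h.2⟩⟩
  have e2 : (C ∩ X) \ Y = C ∩ (X \ Y) := by
    ext x; simp only [Finset.mem_inter, Finset.mem_sdiff]; tauto
  have e3 : (C ∩ X).card = m+1 := by rw [Finset.inter_comm]; exact hCX
  rw [e1, e2, e3, hXYm] at key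
  omega

/-- Labellings of the graph minus one vertex, with `k = 3`. -/
private def delLabel : Fin 6 → Fin 6 → Finset ℕ
  | 0, v => [∅, {0,1,2}, {0,1,3}, {0,2,4}, {1,4,5}, {1,2,5}].get v
  | 1, v => [{0,1,2}, ∅, {0,1,3}, {0,2,4}, {1,2,5}, {1,4,5}].get v
  | 2, v => [{0,1,2}, {0,3,4}, ∅, {0,1,3}, {0,2,5}, {0,4,5}].get v
  | 3, v => [{0,1,2}, {0,3,4}, {0,1,3}, ∅, {0,2,5}, {0,4,5}].get v
  | 4, v => [{0,1,2}, {0,3,4}, {0,1,3}, {0,2,4}, ∅, {3,4,5}].get v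
  | 5, v => [{0,1,2}, {0,3,4}, {0,1,3}, {0,2,4}, {1,2,5}, ∅].get v

private lemma delLabel_card : ∀ i v : Fin 6, v ≠ i → (delLabel i v).card = 3 := by decide

private lemma delLabel_inj : ∀ i u v : Fin 6, u ≠ i → v ≠ i →
    delLabel i u = delLabel i v → u = v := by decide

private lemma delLabel_adj : ∀ i u v : Fin 6, u ≠ i → v ≠ i → u ≠ v →
    (subdividedK23.Adj u v ↔ (delLabel i u ∩ delLabel i v).card = 2) := by decide

set_option linter.all false in
private lemma counting {m : ℕ} {A B C C' D : Finset ℕ}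
    (hABm : (A ∩ B).card = m) (hMC : A ∩ B ⊆ C) (hMC' : A ∩ B ⊆ C')
    (hAC : (A ∩ C).card = m+1) (hBC : (B ∩ C).card = m+1)
    (hAC' : (A ∩ C').card = m+1) (hBC' : (B ∩ C').card = m+1)
    (hCC'le : (C ∩ C').card ≤ m)
    (hAcard : A.card = m+2) (hBcard : B.card = m+2)
    (hDA : (D ∩ A).card = m+1) (hDB : (D ∩ B).card = m)
    (hDCle : (D ∩ C).card ≤ m) (hDC'le : (D ∩ C').card ≤ m) : False := by
  set M := A ∩ B with hMdef
  set P := A \ B with hPdef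
  set Q := B \ A with hQdef
  have hBAm : (B ∩ A).card = m := by rw [Finset.inter_comm]; exact hABm
  have hMC2 : B ∩ A ⊆ C := by rw [Finset.inter_comm]; exact hMC
  have hMC'2 : B ∩ A ⊆ C' := by rw [Finset.inter_comm]; exact hMC'
  -- each common neighbour hits each "side" exactly once
  have hCP : (C ∩ P).card = 1 := split1 hMC hABm hAC
  have hCQ : (C ∩ Q).card = 1 := split1 hMC2 hBAm hBC
  have hC'P : (C' ∩ P).card = 1 := split1 hMC' hABm hAC'
  have hC'Q : (C' ∩ Q).card = 1 := split1 hMC'2 hBAm hBC'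
  -- the two common neighbours use disjoint sides, which together cover P and Q
  have hCC'M : C ∩ C' = M := by
    have hsub : M ⊆ C ∩ C' := Finset.subset_inter hMC hMC'
    exact (Finset.eq_of_subset_of_card_le hsub (by omega)).symm
  have hPdisj : Disjoint (C ∩ P) (C' ∩ P) := by
    rw [Finset.disjoint_left]
    intro x hx hx'
    have hxM : x ∈ M := by
      rw [← hCC'M]
      exact Finset.mem_inter.mpr ⟨(Finset.mem_inter.mp hx).1, (Finset.mem_inter.mp hx').1⟩
    have hxP : x ∈ P := (Finset.mem_inter.mp hx).2
    rw [hMdef, Finset.mem_inter] at hxM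
    rw [hPdef, Finset.mem_sdiff] at hxP
    exact hxP.2 hxM.2
  have hQdisj : Disjoint (C ∩ Q) (C' ∩ Q) := by
    rw [Finset.disjoint_left]
    intro x hx hx'
    have hxM : x ∈ M := by
      rw [← hCC'M]
      exact Finset.mem_inter.mpr ⟨(Finset.mem_inter.mp hx).1, (Finset.mem_inter.mp hx').1⟩
    have hxQ : x ∈ Q := (Finset.mem_inter.mp hx).2
    rw [hMdef, Finset.mem_inter] at hxM
    rw [hQdef, Finset.mem_sdiff] at hxQ
    exact hxQ.2 hxM.1
  have hPcard : P.card = 2 := by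
    have h := Finset.card_inter_add_card_sdiff A B
    rw [← hMdef, ← hPdef] at h
    omega
  have hQcard : Q.card = 2 := by
    have h := Finset.card_inter_add_card_sdiff B A
    rw [← hQdef] at h
    omega
  have hPunion : (C ∩ P) ∪ (C' ∩ P) = P := by
    apply Finset.eq_of_subset_of_card_le
      (Finset.union_subset Finset.inter_subset_right Finset.inter_subset_right)
    rw [Finset.card_union_of_disjoint hPdisj, hCP, hC'P, hPcard]
  have hQunion : (C ∩ Q) ∪ (C' ∩ Q) = Q := by
    apply Finset.eq_of_subset_of_card_le
      (Finset.union_subset Finset.inter_subset_right Finset.inter_subset_right)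
    rw [Finset.card_union_of_disjoint hQdisj, hCQ, hC'Q, hQcard]
  -- now count around the vertex D
  have d1 : (D ∩ M).card + (D ∩ P).card = m+1 := by
    have key := Finset.card_inter_add_card_sdiff (D ∩ A) B
    have e1 : (D ∩ A) ∩ B = D ∩ M := by rw [hMdef, Finset.inter_assoc]
    have e2 : (D ∩ A) \ B = D ∩ P := by
      ext x; rw [hPdef]; simp only [Finset.mem_inter, Finset.mem_sdiff]; tauto
    rw [e1, e2, hDA] at key
    exact key
  have d2 : (D ∩ M).card + (D ∩ Q).card = m := by
    have key := Finset.card_inter_add_card_sdiff (D ∩ B) A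
    have e1 : (D ∩ B) ∩ A = D ∩ M := by
      ext x; rw [hMdef]; simp only [Finset.mem_inter]; tauto
    have e2 : (D ∩ B) \ A = D ∩ Q := by
      ext x; rw [hQdef]; simp only [Finset.mem_inter, Finset.mem_sdiff]; tauto
    rw [e1, e2, hDB] at key
    exact key
  have d3 : (D ∩ M).card + ((D ∩ C) \ M).card ≤ m := by
    have key := Finset.card_inter_add_card_sdiff (D ∩ C) M
    have e1 : (D ∩ C) ∩ M = D ∩ M := by
      ext x
      simp only [Finset.mem_inter]
      exact ⟨fun h => ⟨h.1.1, h.2⟩, fun h => ⟨⟨h.1, hMC h.2⟩, h.2⟩⟩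
    rw [e1] at key
    omega
  have d4 : (D ∩ M).card + ((D ∩ C') \ M).card ≤ m := by
    have key := Finset.card_inter_add_card_sdiff (D ∩ C') M
    have e1 : (D ∩ C') ∩ M = D ∩ M := by
      ext x
      simp only [Finset.mem_inter]
      exact ⟨fun h => ⟨h.1.1, h.2⟩, fun h => ⟨⟨h.1, hMC' h.2⟩, h.2⟩⟩
    rw [e1] at key
    omega
  have hPQdisj : ∀ x, x ∈ P → x ∈ Q → False := by
    intro x hxP hxQ
    rw [hPdef, Finset.mem_sdiff] at hxP
    rw [hQdef, Finset.mem_sdiff] at hxQ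
    exact hxP.2 hxQ.1
  have hPM : ∀ x, x ∈ P → x ∈ M → False := by
    intro x hxP hxM
    rw [hPdef, Finset.mem_sdiff] at hxP
    rw [hMdef, Finset.mem_inter] at hxM
    exact hxP.2 hxM.2
  have hQM : ∀ x, x ∈ Q → x ∈ M → False := by
    intro x hxQ hxM
    rw [hQdef, Finset.mem_sdiff] at hxQ
    rw [hMdef, Finset.mem_inter] at hxM
    exact hxQ.2 hxM.1
  have d5 : (D ∩ (C ∩ P)).card + (D ∩ (C' ∩ P)).card = (D ∩ P).card := by
    have hdisj : Disjoint (D ∩ (C ∩ P)) (D ∩ (C' ∩ P)) :=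
      (hPdisj.mono Finset.inter_subset_right Finset.inter_subset_right)
    rw [← Finset.card_union_of_disjoint hdisj, ← Finset.inter_union_distrib_left, hPunion]
  have d6 : (D ∩ (C ∩ Q)).card + (D ∩ (C' ∩ Q)).card = (D ∩ Q).card := by
    have hdisj : Disjoint (D ∩ (C ∩ Q)) (D ∩ (C' ∩ Q)) :=
      (hQdisj.mono Finset.inter_subset_right Finset.inter_subset_right)
    rw [← Finset.card_union_of_disjoint hdisj, ← Finset.inter_union_distrib_left, hQunion]
  have d7 : (D ∩ (C ∩ P)).card + (D ∩ (C ∩ Q)).card ≤ ((D ∩ C) \ M).card := by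
    have hdisj : Disjoint (D ∩ (C ∩ P)) (D ∩ (C ∩ Q)) := by
      rw [Finset.disjoint_left]
      intro x hx hx'
      exact hPQdisj x (Finset.mem_inter.mp (Finset.mem_inter.mp hx).2).2
        (Finset.mem_inter.mp (Finset.mem_inter.mp hx').2).2
    rw [← Finset.card_union_of_disjoint hdisj]
    apply Finset.card_le_card
    intro x hx
    rw [Finset.mem_union] at hx
    rw [Finset.mem_sdiff, Finset.mem_inter]
    rcases hx with hx | hx
    · rw [Finset.mem_inter, Finset.mem_inter] at hx
      exact ⟨⟨hx.1, hx.2.1⟩, fun hM => hPM x hx.2.2 hM⟩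
    · rw [Finset.mem_inter, Finset.mem_inter] at hx
      exact ⟨⟨hx.1, hx.2.1⟩, fun hM => hQM x hx.2.2 hM⟩
  have d8 : (D ∩ (C' ∩ P)).card + (D ∩ (C' ∩ Q)).card ≤ ((D ∩ C') \ M).card := by
    have hdisj : Disjoint (D ∩ (C' ∩ P)) (D ∩ (C' ∩ Q)) := by
      rw [Finset.disjoint_left]
      intro x hx hx'
      exact hPQdisj x (Finset.mem_inter.mp (Finset.mem_inter.mp hx).2).2
        (Finset.mem_inter.mp (Finset.mem_inter.mp hx').2).2
    rw [← Finset.card_union_of_disjoint hdisj]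
    apply Finset.card_le_card
    intro x hx
    rw [Finset.mem_union] at hx
    rw [Finset.mem_sdiff, Finset.mem_inter]
    rcases hx with hx | hx
    · rw [Finset.mem_inter, Finset.mem_inter] at hx
      exact ⟨⟨hx.1, hx.2.1⟩, fun hM => hPM x hx.2.2 hM⟩
    · rw [Finset.mem_inter, Finset.mem_inter] at hx
      exact ⟨⟨hx.1, hx.2.1⟩, fun hM => hQM x hx.2.2 hM⟩
  omega

set_option linter.all false in
/-- The 6-vertex graph obtained from `K_{2,3}` by subdividing one edge once is
minimally unlabellable: it is not labellable, but every proper induced subgraph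
of it is labellable. -/
theorem subdividedK23_minimally_unlabellable :
    ¬ Labellable subdividedK23 ∧
      ∀ s : Set (Fin 6), s ≠ Set.univ → Labellable (subdividedK23.induce s) := by
  constructor
  · rintro ⟨k, hk, ℓ, hinj, hcard, hadj⟩
    have lne : ∀ u v : Fin 6, u ≠ v → ℓ u ≠ ℓ v := fun u v h he => h (hinj he)
    have nadj01 : ¬ subdividedK23.Adj 0 1 := by decide
    -- first, `k ≥ 2`
    have hk2 : 2 ≤ k := by
      by_contra hcon
      have hk1 : k = 1 := by omega
      subst hk1
      have h01 : (ℓ 0 ∩ ℓ 1).card ≠ 0 := fun h => nadj01 ((hadj 0 1 (by decide)).mpr h)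
      have e1 : ℓ 0 ∩ ℓ 1 = ℓ 0 :=
        Finset.eq_of_subset_of_card_le Finset.inter_subset_left (by rw [hcard 0]; omega)
      have e2 : ℓ 0 ∩ ℓ 1 = ℓ 1 :=
        Finset.eq_of_subset_of_card_le Finset.inter_subset_right (by rw [hcard 1]; omega)
      exact lne 0 1 (by decide) (by rw [← e1, e2])
    obtain ⟨m, rfl⟩ : ∃ m, k = m + 2 := ⟨k - 2, by omega⟩
    have adjIff : ∀ u v : Fin 6, u ≠ v →
        (subdividedK23.Adj u v ↔ (ℓ u ∩ ℓ v).card = m + 1) := by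
      intro u v huv
      have := hadj u v huv
      simpa using this
    -- adjacency / non-adjacency facts about the labels
    have hAC : (ℓ 0 ∩ ℓ 2).card = m+1 := (adjIff 0 2 (by decide)).mp (by decide)
    have hBC : (ℓ 1 ∩ ℓ 2).card = m+1 := (adjIff 1 2 (by decide)).mp (by decide)
    have hAC' : (ℓ 0 ∩ ℓ 3).card = m+1 := (adjIff 0 3 (by decide)).mp (by decide)
    have hBC' : (ℓ 1 ∩ ℓ 3).card = m+1 := (adjIff 1 3 (by decide)).mp (by decide)
    have hAD : (ℓ 0 ∩ ℓ 4).card = m+1 := (adjIff 0 4 (by decide)).mp (by decide)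
    have hBE : (ℓ 1 ∩ ℓ 5).card = m+1 := (adjIff 1 5 (by decide)).mp (by decide)
    have hDE : (ℓ 4 ∩ ℓ 5).card = m+1 := (adjIff 4 5 (by decide)).mp (by decide)
    have hABn : (ℓ 0 ∩ ℓ 1).card ≠ m+1 :=
      fun h => (by decide : ¬ subdividedK23.Adj 0 1) ((adjIff 0 1 (by decide)).mpr h)
    have hBDn : (ℓ 1 ∩ ℓ 4).card ≠ m+1 :=
      fun h => (by decide : ¬ subdividedK23.Adj 1 4) ((adjIff 1 4 (by decide)).mpr h)
    have hCC'n : (ℓ 2 ∩ ℓ 3).card ≠ m+1 :=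
      fun h => (by decide : ¬ subdividedK23.Adj 2 3) ((adjIff 2 3 (by decide)).mpr h)
    have hCDn : (ℓ 2 ∩ ℓ 4).card ≠ m+1 :=
      fun h => (by decide : ¬ subdividedK23.Adj 2 4) ((adjIff 2 4 (by decide)).mpr h)
    have hC'Dn : (ℓ 3 ∩ ℓ 4).card ≠ m+1 :=
      fun h => (by decide : ¬ subdividedK23.Adj 3 4) ((adjIff 3 4 (by decide)).mpr h)
    -- structure of the common neighbours of the two non-adjacent hubs
    have hABle : (ℓ 0 ∩ ℓ 1).card ≤ m :=
      inter_card_le (hcard 0) (hcard 1) (lne 0 1 (by decide)) hABn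
    obtain ⟨hABm, hMC, -⟩ :=
      common_nbr (hcard 0) (hcard 1) (hcard 2) hABle hAC hBC
    obtain ⟨-, hMC', -⟩ :=
      common_nbr (hcard 0) (hcard 1) (hcard 3) hABle hAC' hBC'
    have hBDle : (ℓ 1 ∩ ℓ 4).card ≤ m :=
      inter_card_le (hcard 1) (hcard 4) (lne 1 4 (by decide)) hBDn
    obtain ⟨hBDm, -, -⟩ :=
      common_nbr (hcard 1) (hcard 4) (hcard 5) hBDle hBE hDE
    have hCC'le : (ℓ 2 ∩ ℓ 3).card ≤ m :=
      inter_card_le (hcard 2) (hcard 3) (lne 2 3 (by decide)) hCC'n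
    have hCDle : (ℓ 2 ∩ ℓ 4).card ≤ m :=
      inter_card_le (hcard 2) (hcard 4) (lne 2 4 (by decide)) hCDn
    have hC'Dle : (ℓ 3 ∩ ℓ 4).card ≤ m :=
      inter_card_le (hcard 3) (hcard 4) (lne 3 4 (by decide)) hC'Dn
    exact counting hABm hMC hMC' hAC hBC hAC' hBC' hCC'le (hcard 0) (hcard 1)
      (by rw [Finset.inter_comm]; exact hAD) (by rw [Finset.inter_comm]; exact hBDm)
      (by rw [Finset.inter_comm]; exact hCDle) (by rw [Finset.inter_comm]; exact hC'Dle)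
  · intro s hs
    obtain ⟨i, hi⟩ : ∃ i, i ∉ s := by
      by_contra hcon
      push_neg at hcon
      exact hs (Set.eq_univ_of_forall hcon)
    refine ⟨3, by norm_num, fun v => delLabel i v.1, ?_, ?_, ?_⟩
    · intro u v h
      exact Subtype.ext (delLabel_inj i u.1 v.1
        (fun he => hi (he ▸ u.2)) (fun he => hi (he ▸ v.2)) h)
    · intro v
      exact delLabel_card i v.1 (fun he => hi (he ▸ v.2))
    · intro u v huv
      have hne : u.1 ≠ v.1 := fun h => huv (Subtype.ext h)
      exact delLabel_adj i u.1 v.1 (fun he => hi (he ▸ u.2)) (fun he => hi (he ▸ v.2)) hne
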